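/- arXiv:2006.07449 — 6 statements merged into one kernel-verified Lean document; each statement's English description precedes it below -/
import Mathlib

section
/- Let G be a finite simple graph with vertex set V, let A ⊆ V, and let M_A be a maximal independent set of the induced subgraph G[A]. Let B be the set of all vertices of V that are not in A and have no neighbor in M_A, and let M_B be a maximal independent set of the induced subgraph G[B]. Then M_A ∪ M_B is a maximal independent set of G. -/
/-- Let `G` be a finite simple graph with vertex set `V`, `A ⊆ V`,
and `MA` a maximal independent set of the induced subgraph `G[A]`.  Let `B` be the set
of vertices not in `A` having no neighbor in `MA`, and `MB` a maximal independent set of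
`G[B]`.  Then `MA ∪ MB` is a maximal independent set of `G`. -/
theorem sleepingMIS_union_is_MIS {V : Type*} [Fintype V] (G : SimpleGraph V)
    (A MA B MB : Set V)
    (hMAsub : MA ⊆ A)
    (hMAind : ∀ u ∈ MA, ∀ v ∈ MA, ¬ G.Adj u v)
    (hMAmax : ∀ v ∈ A, v ∈ MA ∨ ∃ w ∈ MA, G.Adj v w)
    (hB : B = {v | v ∉ A ∧ ∀ w ∈ MA, ¬ G.Adj v w})
    (hMBsub : MB ⊆ B)
    (hMBind : ∀ u ∈ MB, ∀ v ∈ MB, ¬ G.Adj u v)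
    (hMBmax : ∀ v ∈ B, v ∈ MB ∨ ∃ w ∈ MB, G.Adj v w) :
    (∀ u ∈ MA ∪ MB, ∀ v ∈ MA ∪ MB, ¬ G.Adj u v) ∧
    (∀ v : V, v ∈ MA ∪ MB ∨ ∃ w ∈ MA ∪ MB, G.Adj v w) := by
  have hBnoadj : ∀ u ∈ MB, ∀ w ∈ MA, ¬ G.Adj u w := by
    intro u hu w hw
    have := hMBsub hu
    rw [hB] at this
    exact this.2 w hw
  constructor
  · rintro u (hu | hu) v (hv | hv) hadj
    · exact hMAind u hu v hv hadj
    · exact hBnoadj v hv u hu hadj.symm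
    · exact hBnoadj u hu v hv hadj
    · exact hMBind u hu v hv hadj
  · intro v
    by_cases hvA : v ∈ A
    · rcases hMAmax v hvA with h | ⟨w, hw, hadj⟩
      · exact Or.inl (Or.inl h)
      · exact Or.inr ⟨w, Or.inl hw, hadj⟩
    · by_cases hvB : v ∈ B
      · rcases hMBmax v hvB with h | ⟨w, hw, hadj⟩
        · exact Or.inl (Or.inr h)
        · exact Or.inr ⟨w, Or.inr hw, hadj⟩
      · rw [hB] at hvB
        have h2 : ¬ (v ∉ A ∧ ∀ w ∈ MA, ¬ G.Adj v w) := hvB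
        push_neg at h2
        obtain ⟨w, hw, hadj⟩ := h2 hvA
        exact Or.inr ⟨w, Or.inl hw, hadj⟩
end

section
/- Let G be a finite simple graph with vertex set V, let A ⊆ V, and let M be a maximal independent set of the induced subgraph G[A]. Let I' be the set of vertices v ∈ V \ A such that v has no neighbor in M and every neighbor w of v satisfies: w ∉ M and w has a neighbor in M. Then M ∪ I' is an independent set of G. -/
/-- Let `G` be a finite simple graph, `A ⊆ V`, and `M` a maximal
independent set of the induced subgraph `G[A]`.  Let `I'` be the set of vertices
`v ∈ V \ A` such that `v` has no neighbor in `M` and every neighbor `w` of `v`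
satisfies `w ∉ M` and `w` has a neighbor in `M`.  Then `M ∪ I'` is an independent
set of `G`. -/
theorem second_isolated_detection_independent {V : Type*} [Fintype V] (G : SimpleGraph V)
    (A M I' : Set V)
    (hMsub : M ⊆ A)
    (hMind : ∀ u ∈ M, ∀ v ∈ M, ¬ G.Adj u v)
    (hMmax : ∀ v ∈ A, v ∈ M ∨ ∃ w ∈ M, G.Adj v w)
    (hI' : I' = {v | v ∉ A ∧ (∀ w ∈ M, ¬ G.Adj v w) ∧
      ∀ w, G.Adj v w → w ∉ M ∧ ∃ u ∈ M, G.Adj w u}) :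
    ∀ u ∈ M ∪ I', ∀ v ∈ M ∪ I', ¬ G.Adj u v := by
  subst hI'
  rintro u (hu | ⟨_, hu2, hu3⟩) v (hv | ⟨_, hv2, hv3⟩) hadj
  · exact hMind u hu v hv hadj
  · exact hv2 u hu hadj.symm
  · exact hu2 v hv hadj
  · obtain ⟨w, hw, hadjw⟩ := (hu3 v hadj).2
    exact hv2 w hw hadjw
end

section
/- Let G be a finite simple graph with vertex set U. Let (X_v)_{v ∈ U} be independent random bits, each equal to 1 with probability 1/2, and independently let ≺ be a uniformly random linear order on U. Let A = { v ∈ U : X_v = 1 }, and let M be the lexicographically first maximal independent set of the induced subgraph G[A] with respect to ≺, i.e., the unique M ⊆ A such that for every v ∈ A: v ∈ M if and only if every neighbor w of v with w ∈ A and v ≺ w satisfies w ∉ M. Let R = { v ∈ U : X_v = 0, v has no neighbor in M, and v has some neighbor w with w ∉ M and w has no neighbor in M }. Then for every vertex v ∈ U, Pr[v ∈ R] ≤ 1/4. -/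
/-- **per-vertex Pruning Lemma, Lemma 4.3.**
Randomness is modeled by the uniform distribution on pairs `(b, π)` where
`b : V → Bool` is the vector of independent uniform bits and `π` is a uniformly random
permutation of `V` (the random linear order `≺` is `v ≺ w ↔ π v < π w`, which is a
uniformly random linear order, independent of the bits).
`A = {v | b v = 1}`; `M b π` is the lexicographically first maximal independent set of
the induced subgraph `G[A]` w.r.t. `≺`; and `R b π` is the set of vertices `v` with
`b v = 0`, no neighbor in `M`, and some neighbor `w` with `w ∉ M` having no neighbor
in `M`.  Then each vertex `v` satisfies `Pr[v ∈ R] ≤ 1/4`. -/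
theorem pruning_lemma_pointwise {V : Type*} [Fintype V] [LinearOrder V]
    (G : SimpleGraph V)
    (M : (V → Bool) → Equiv.Perm V → Set V)
    (hMsub : ∀ b π, ∀ v ∈ M b π, b v = true)
    (hMfix : ∀ b π, ∀ v : V, b v = true →
      (v ∈ M b π ↔ ∀ w : V, G.Adj v w → b w = true → π v < π w → w ∉ M b π))
    (R : (V → Bool) → Equiv.Perm V → Set V)
    (hR : ∀ b π, ∀ v : V, v ∈ R b π ↔
      (b v = false ∧ (∀ w, G.Adj v w → w ∉ M b π) ∧
        ∃ w, G.Adj v w ∧ w ∉ M b π ∧ ∀ u, G.Adj w u → u ∉ M b π))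
    (v : V) :
    (({p : (V → Bool) × Equiv.Perm V | v ∈ R p.1 p.2}).ncard : ℝ)
      / (Fintype.card ((V → Bool) × Equiv.Perm V) : ℝ) ≤ 1 / 4 := by
  classical
  -- vertices with false bit are never in M
  have hnotM : ∀ (b : V → Bool) (π : Equiv.Perm V) (u : V), b u = false → u ∉ M b π := by
    intro b π u h hm
    rw [hMsub b π u hm] at h; exact Bool.noConfusion h
  -- agreement above the flipped vertex
  have agree : ∀ (π : Equiv.Perm V) (b b' : V → Bool) (w : V),
      (∀ x, x ≠ w → b x = b' x) → ∀ u, π w < π u → (u ∈ M b π ↔ u ∈ M b' π) := by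
    intro π b b' w hbb u
    refine (InvImage.wf π wellFounded_gt).induction
      (C := fun u => π w < π u → (u ∈ M b π ↔ u ∈ M b' π)) u ?_
    intro u ih hu
    have hne : u ≠ w := by
      rintro rfl; exact lt_irrefl _ hu
    by_cases hb : b u = true
    · have hb' : b' u = true := (hbb u hne) ▸ hb
      rw [hMfix b π u hb, hMfix b' π u hb']
      constructor
      · intro h x hadj hbx hlt
        have hwx : π w < π x := hu.trans hlt
        have hxw : x ≠ w := by rintro rfl; exact lt_irrefl _ hwx
        rw [← ih x hlt hwx]
        exact h x hadj (by rw [hbb x hxw]; exact hbx) hlt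
      · intro h x hadj hbx hlt
        have hwx : π w < π x := hu.trans hlt
        have hxw : x ≠ w := by rintro rfl; exact lt_irrefl _ hwx
        rw [ih x hlt hwx]
        exact h x hadj (by rw [← hbb x hxw]; exact hbx) hlt
    · have hbf : b u = false := by revert hb; cases b u <;> simp
      have hbf' : b' u = false := (hbb u hne) ▸ hbf
      exact iff_of_false (hnotM b π u hbf) (hnotM b' π u hbf')
  -- flipping the bit of an uncovered vertex puts it into M
  have flipIn : ∀ (b : V → Bool) (π : Equiv.Perm V) (w : V),
      (∀ x, G.Adj w x → x ∉ M b π) → w ∈ M (Function.update b w true) π := by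
    intro b π w hno
    have hbw : Function.update b w true w = true := Function.update_self _ _ _
    rw [hMfix _ π w hbw]
    intro x hadj _ hlt hxM
    have hxw : x ≠ w := hadj.ne'
    have := (agree π b (Function.update b w true) w
      (fun y hy => (Function.update_of_ne hy _ _).symm) x hlt).mpr hxM
    exact hno x hadj this
  -- an uncovered vertex outside M has a false bit
  have witfalse : ∀ (b : V → Bool) (π : Equiv.Perm V) (w : V),
      w ∉ M b π → (∀ u, G.Adj w u → u ∉ M b π) → b w = false := by
    intro b π w hw hno
    by_contra h
    have hb : b w = true := by revert h; cases b w <;> simp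
    exact hw ((hMfix b π w hb).mpr fun x hadj _ _ => hno x hadj)
  set Ω := (V → Bool) × Equiv.Perm V
  set E : Set Ω := {p : Ω | v ∈ R p.1 p.2} with hE
  set S : Set Ω := {p : Ω | p.1 v = false} with hS
  -- the witness function
  have hwit : ∀ p : Ω, p ∈ E →
      ∃ w, G.Adj v w ∧ w ∉ M p.1 p.2 ∧ ∀ u, G.Adj w u → u ∉ M p.1 p.2 := by
    intro p hp
    exact ((hR p.1 p.2 v).mp hp).2.2
  let wf : ∀ p : Ω, p ∈ E → V := fun p hp => (hwit p hp).choose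
  let f : Ω → Ω := fun p => if h : p ∈ E then (Function.update p.1 (wf p h) true, p.2) else p
  -- basic facts about points of E
  have hEfacts : ∀ p : Ω, ∀ hp : p ∈ E,
      p.1 v = false ∧ (∀ x, G.Adj v x → x ∉ M p.1 p.2) ∧
      G.Adj v (wf p hp) ∧ (wf p hp) ∉ M p.1 p.2 ∧
      (∀ u, G.Adj (wf p hp) u → u ∉ M p.1 p.2) := by
    intro p hp
    obtain ⟨h1, h2, -⟩ := (hR p.1 p.2 v).mp hp
    obtain ⟨c1, c2, c3⟩ := (hwit p hp).choose_spec
    exact ⟨h1, h2, c1, c2, c3⟩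
  -- the flipped witness is the π-maximal neighbor of v in the new M
  have hkey : ∀ p : Ω, ∀ hp : p ∈ E,
      (wf p hp ∈ M (Function.update p.1 (wf p hp) true) p.2) ∧
      (∀ x, G.Adj v x → x ∈ M (Function.update p.1 (wf p hp) true) p.2 →
        p.2 x ≤ p.2 (wf p hp)) := by
    intro p hp
    obtain ⟨h1, h2, c1, c2, c3⟩ := hEfacts p hp
    refine ⟨flipIn p.1 p.2 _ c3, ?_⟩
    intro x hadj hxM
    by_contra h
    push_neg at h
    have := (agree p.2 p.1 (Function.update p.1 (wf p hp) true) (wf p hp)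
      (fun y hy => (Function.update_of_ne hy _ _).symm) x h).mpr hxM
    exact h2 x hadj this
  -- f maps E into S \ E
  have hmaps : ∀ p ∈ E, f p ∈ S \ E := by
    intro p hp
    obtain ⟨h1, h2, c1, c2, c3⟩ := hEfacts p hp
    have hfp : f p = (Function.update p.1 (wf p hp) true, p.2) := dif_pos hp
    constructor
    · show (f p).1 v = false
      rw [hfp]
      have : wf p hp ≠ v := c1.ne'
      simp only [Function.update_of_ne this.symm.symm]
      rw [Function.update_of_ne (Ne.symm this)]
      exact h1
    · intro hcon
      have hcon' : v ∈ R (f p).1 (f p).2 := hcon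
      rw [hfp] at hcon'
      obtain ⟨-, h2', -⟩ := (hR _ _ v).mp hcon'
      exact h2' (wf p hp) c1 (hkey p hp).1
  -- f is injective on E
  have hinj : Set.InjOn f E := by
    intro p hp q hq hfpq
    have hfp : f p = (Function.update p.1 (wf p hp) true, p.2) := dif_pos hp
    have hfq : f q = (Function.update q.1 (wf q hq) true, q.2) := dif_pos hq
    rw [hfp, hfq] at hfpq
    injection hfpq with hb hπ
    obtain ⟨p1, p2, pc1, pc2, pc3⟩ := hEfacts p hp
    obtain ⟨q1, q2, qc1, qc2, qc3⟩ := hEfacts q hq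
    have hkp := hkey p hp
    have hkq := hkey q hq
    -- w_q ∈ M(b', π) and adjacent to v, so π w_q ≤ π w_p, and vice versa
    have hqin : wf q hq ∈ M (Function.update p.1 (wf p hp) true) p.2 := by
      rw [hb, hπ]; exact hkq.1
    have hpin : wf p hp ∈ M (Function.update q.1 (wf q hq) true) q.2 := by
      rw [← hb, ← hπ]; exact hkp.1
    have le1 : p.2 (wf q hq) ≤ p.2 (wf p hp) := hkp.2 _ qc1 hqin
    have le2 : q.2 (wf p hp) ≤ q.2 (wf q hq) := hkq.2 _ pc1 hpin
    rw [← hπ] at le2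
    have hww : wf p hp = wf q hq := p.2.injective (le_antisymm le2 le1)
    -- recover the bit vectors
    have hwfalse_p : p.1 (wf p hp) = false := witfalse p.1 p.2 _ pc2 pc3
    have hwfalse_q : q.1 (wf q hq) = false := witfalse q.1 q.2 _ qc2 qc3
    have hb1 : p.1 = q.1 := by
      funext x
      by_cases hx : x = wf p hp
      · rw [hx, hwfalse_p, hww, hwfalse_q]
      · have := congrFun hb x
        rwa [Function.update_of_ne hx, Function.update_of_ne (hww ▸ hx)] at this
    exact Prod.ext hb1 hπ
  -- counting
  have hcard2E : 2 * E.ncard ≤ S.ncard := by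
    have hES : E ⊆ S := fun p hp => ((hR p.1 p.2 v).mp hp).1
    have himg : f '' E ⊆ S \ E := by
      rintro _ ⟨p, hp, rfl⟩; exact hmaps p hp
    have hdisj : Disjoint E (f '' E) := by
      refine Set.disjoint_left.mpr fun p hp hp' => ?_
      exact (himg hp').2 hp
    have h1 : (f '' E).ncard = E.ncard := Set.ncard_image_of_injOn hinj
    have h2 : E.ncard + (f '' E).ncard = (E ∪ f '' E).ncard :=
      (Set.ncard_union_eq hdisj (Set.toFinite _) (Set.toFinite _)).symm
    have h3 : (E ∪ f '' E).ncard ≤ S.ncard := by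
      refine Set.ncard_le_ncard ?_ (Set.toFinite _)
      exact Set.union_subset hES fun p hp => (himg hp).1
    omega
  have hcardS : 2 * S.ncard = Fintype.card Ω := by
    -- S and Sᶜ are in bijection by flipping the bit at v
    let g : Ω → Ω := fun p => (Function.update p.1 v (!p.1 v), p.2)
    have hginv : Function.Involutive g := by
      intro p
      have h1 : (g (g p)).1 = p.1 := by
        funext x
        by_cases hx : x = v
        · subst hx; simp [g]
        · simp [g, Function.update_of_ne hx]
      exact Prod.ext h1 rfl
    have hcompl : Sᶜ = g '' S := by
      ext p
      constructor
      · intro hp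
        refine ⟨g p, ?_, hginv p⟩
        have : p.1 v = true := by
          have := hp
          simp only [hS, Set.mem_compl_iff, Set.mem_setOf_eq] at this
          revert this; cases p.1 v <;> simp
        show (g p).1 v = false
        simp [g, this]
      · rintro ⟨q, hq, rfl⟩
        have hqv : q.1 v = false := hq
        show ¬ ((g q).1 v = false)
        simp [g, hqv]
      
    have h1 : (Sᶜ).ncard = S.ncard := by
      rw [hcompl]
      exact Set.ncard_image_of_injective S hginv.injective
    have h2 : S.ncard + Sᶜ.ncard = Nat.card Ω := Set.ncard_add_ncard_compl S
    rw [Nat.card_eq_fintype_card] at h2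
    omega
  have hfinal : 4 * E.ncard ≤ Fintype.card Ω := by omega
  show (E.ncard : ℝ) / (Fintype.card Ω : ℝ) ≤ 1 / 4
  have hpos : (0 : ℝ) < (Fintype.card Ω : ℝ) := by
    exact_mod_cast Fintype.card_pos
  rw [div_le_div_iff₀ hpos (by norm_num : (0:ℝ) < 4)]
  calc (E.ncard : ℝ) * 4 = ((4 * E.ncard : ℕ) : ℝ) := by push_cast; ring
    _ ≤ ((Fintype.card Ω : ℕ) : ℝ) := by exact_mod_cast hfinal
    _ = 1 * (Fintype.card Ω : ℝ) := by ring
end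

section
/- Let G be a finite simple graph with vertex set U. Let (X_v)_{v ∈ U} be independent random bits, each equal to 1 with probability 1/2, and independently let ≺ be a uniformly random linear order on U. Let A = { v ∈ U : X_v = 1 }, and let M be the lexicographically first maximal independent set of the induced subgraph G[A] with respect to ≺, i.e., the unique M ⊆ A such that for every v ∈ A: v ∈ M if and only if every neighbor w of v with w ∈ A and v ≺ w satisfies w ∉ M. Let R = { v ∈ U : X_v = 0, v has no neighbor in M, and v has some neighbor w with w ∉ M and w has no neighbor in M }. Then E[|R|] ≤ |U| / 4. -/
open scoped Classical

section
variable {V : Type*} [Fintype V] [LinearOrder V]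
    (G : SimpleGraph V)
    (M : (V → Bool) → Equiv.Perm V → Set V)

/-- Adding to `A` a vertex whose neighbors all avoid `M` adds it to `M`. -/
lemma add_lemma
    (hMsub : ∀ b π, ∀ v ∈ M b π, b v = true)
    (hMfix : ∀ b π, ∀ v : V, b v = true →
      (v ∈ M b π ↔ ∀ w : V, G.Adj v w → b w = true → π v < π w → w ∉ M b π))
    (b : V → Bool) (π : Equiv.Perm V) (w : V)
    (hbw : b w = false) (hw : ∀ u, G.Adj w u → u ∉ M b π) :
    ∀ u : V, u ∈ M (Function.update b w true) π ↔ (u ∈ M b π ∨ u = w) := by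
  set b' := Function.update b w true with hb'def
  have hb'w : b' w = true := by simp [hb'def]
  have hb'x : ∀ x, x ≠ w → b' x = b x := fun x h => Function.update_of_ne h _ _
  have hb' : ∀ x, b x = true → b' x = true := by
    intro x hx
    by_cases h : x = w
    · simp [hb'def, h]
    · rw [hb'x x h]; exact hx
  suffices H : ∀ t : V, ∀ u, π u = t → (u ∈ M b' π ↔ u ∈ M b π ∨ u = w) by
    intro u; exact H (π u) u rfl
  intro t
  refine (wellFounded_gt (α := V)).induction
    (C := fun t => ∀ u, π u = t → (u ∈ M b' π ↔ u ∈ M b π ∨ u = w)) t ?_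
  intro t ih u hu
  subst hu
  by_cases huw : u = w
  · subst huw
    constructor
    · intro _; exact Or.inr rfl
    · intro _
      rw [hMfix b' π u hb'w]
      intro x hx _ hlt hxM'
      have hxu : x ∈ M b π ∨ x = u := (ih (π x) hlt x rfl).mp hxM'
      rcases hxu with h1 | h2
      · exact hw x hx h1
      · subst h2; exact (G.irrefl hx)
  · by_cases hbu : b u = true
    · have hb'u : b' u = true := hb' u hbu
      rw [hMfix b' π u hb'u, hMfix b π u hbu]
      constructor
      · intro h
        refine Or.inl ?_
        intro x hx hbx hlt hxM
        exact h x hx (hb' x hbx) hlt (((ih (π x) hlt x rfl)).mpr (Or.inl hxM))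
      · intro h x hx hbx' hlt hxM'
        rcases h with h | h
        · rcases (ih (π x) hlt x rfl).mp hxM' with h1 | h2
          · exact h x hx (hMsub b π x h1) hlt h1
          · subst h2
            exact hw u (G.adj_symm hx) ((hMfix b π u hbu).mpr h)
        · exact huw h
    · have hb'u : b' u ≠ true := by rw [hb'x u huw]; exact hbu
      constructor
      · intro h; exact absurd (hMsub b' π u h) hb'u
      · intro h
        rcases h with h | h
        · exact absurd (hMsub b π u h) hbu
        · exact absurd h huw

lemma count_lemma
    (hMsub : ∀ b π, ∀ v ∈ M b π, b v = true)
    (hMfix : ∀ b π, ∀ v : V, b v = true →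
      (v ∈ M b π ↔ ∀ w : V, G.Adj v w → b w = true → π v < π w → w ∉ M b π))
    (R : (V → Bool) → Equiv.Perm V → Set V)
    (hR : ∀ b π, ∀ v : V, v ∈ R b π ↔
      (b v = false ∧ (∀ w, G.Adj v w → w ∉ M b π) ∧
        ∃ w, G.Adj v w ∧ w ∉ M b π ∧ ∀ u, G.Adj w u → u ∉ M b π))
    (π : Equiv.Perm V) (v : V) :
    4 * (Finset.univ.filter (fun b : V → Bool => v ∈ R b π)).card
      ≤ Fintype.card (V → Bool) := by
  classical
  set E := Finset.univ.filter (fun b : V → Bool => v ∈ R b π) with hE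
  have hmem : ∀ b, b ∈ E ↔ v ∈ R b π := by intro b; simp [hE]
  have hwex : ∀ b, v ∈ R b π →
      ∃ w, G.Adj v w ∧ w ∉ M b π ∧ ∀ u, G.Adj w u → u ∉ M b π :=
    fun b hb => ((hR b π v).mp hb).2.2
  set wit : (V → Bool) → V :=
    fun b => if h : v ∈ R b π then Classical.choose (hwex b h) else v with hwit
  set f : (V → Bool) → (V → Bool) := fun b => Function.update b (wit b) true with hf
  -- properties of the witness
  have hwspec : ∀ b, v ∈ R b π →
      G.Adj v (wit b) ∧ wit b ∉ M b π ∧ ∀ u, G.Adj (wit b) u → u ∉ M b π := by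
    intro b hb
    have := Classical.choose_spec (hwex b hb)
    simpa [hwit, dif_pos hb] using this
  have hbitw : ∀ b, v ∈ R b π → b (wit b) = false := by
    intro b hb
    obtain ⟨hadj, hnot, hnb⟩ := hwspec b hb
    by_contra hne
    have htrue : b (wit b) = true := by
      cases hbw : b (wit b) with
      | false => exact absurd hbw hne
      | true => rfl
    exact hnot ((hMfix b π (wit b) htrue).mpr (fun x hx _ _ => hnb x hx))
  have hMeq : ∀ b, v ∈ R b π →
      ∀ u : V, u ∈ M (f b) π ↔ (u ∈ M b π ∨ u = wit b) := by
    intro b hb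
    exact add_lemma G M hMsub hMfix b π (wit b) (hbitw b hb) (hwspec b hb).2.2
  have hvw : ∀ b, v ∈ R b π → v ≠ wit b := fun b hb => (hwspec b hb).1.ne
  -- E and f '' E land in { b | b v = false } and are disjoint, f injective on E
  set F0 := Finset.univ.filter (fun b : V → Bool => b v = false) with hF0
  have h1 : E ⊆ F0 := by
    intro b hb
    simp only [hF0, Finset.mem_filter, Finset.mem_univ, true_and]
    exact ((hR b π v).mp ((hmem b).mp hb)).1
  have h2 : E.image f ⊆ F0 := by
    intro c hc
    obtain ⟨b, hb, rfl⟩ := Finset.mem_image.mp hc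
    have hb' := (hmem b).mp hb
    simp only [hF0, Finset.mem_filter, Finset.mem_univ, true_and]
    rw [hf]
    simp only [Function.update_of_ne (hvw b hb')]
    exact ((hR b π v).mp hb').1
  have h3 : Disjoint E (E.image f) := by
    rw [Finset.disjoint_left]
    intro c hcE hcI
    obtain ⟨b, hb, hfb⟩ := Finset.mem_image.mp hcI
    have hb' := (hmem b).mp hb
    have hc' := (hmem c).mp hcE
    have hwM : wit b ∈ M c π := by
      rw [← hfb]
      exact (hMeq b hb' (wit b)).mpr (Or.inr rfl)
    exact ((hR c π v).mp hc').2.1 (wit b) (hwspec b hb').1 hwM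
  have h4 : Set.InjOn f ↑E := by
    intro b1 hb1 b2 hb2 hfeq
    have h1' := (hmem b1).mp (by simpa using hb1)
    have h2' := (hmem b2).mp (by simpa using hb2)
    by_cases hww : wit b1 = wit b2
    · funext x
      by_cases hx : x = wit b1
      · rw [hx, hbitw b1 h1', hww, hbitw b2 h2']
      · have e1 : f b1 x = b1 x := Function.update_of_ne hx _ _
        have e2 : f b2 x = b2 x := Function.update_of_ne (hww ▸ hx) _ _
        rw [← e1, ← e2, hfeq]
    · exfalso
      have hw1 : wit b1 ∈ M (f b1) π := (hMeq b1 h1' (wit b1)).mpr (Or.inr rfl)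
      rw [hfeq] at hw1
      rcases (hMeq b2 h2' (wit b1)).mp hw1 with h | h
      · exact ((hR b2 π v).mp h2').2.1 (wit b1) (hwspec b1 h1').1 h
      · exact hww h
  -- cardinality bookkeeping
  have hcard2 : 2 * E.card ≤ F0.card := by
    have himg : (E.image f).card = E.card := Finset.card_image_of_injOn h4
    have := Finset.card_le_card (Finset.union_subset h1 h2)
    rw [Finset.card_union_of_disjoint h3, himg] at this
    omega
  have hF0half : 2 * F0.card = Fintype.card (V → Bool) := by
    have hbij : F0.card
        = (Finset.univ.filter (fun b : V → Bool => ¬ (b v = false))).card := by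
      refine Finset.card_bij' (fun b _ => Function.update b v true)
        (fun b _ => Function.update b v false) ?_ ?_ ?_ ?_
      · intro b hb
        simp
      · intro b hb
        simp [hF0]
      · intro b hb
        simp only [hF0, Finset.mem_filter, Finset.mem_univ, true_and] at hb
        funext x
        by_cases hx : x = v
        · subst hx; simp [hb]
        · simp [Function.update_of_ne hx]
      · intro b hb
        simp only [Finset.mem_filter, Finset.mem_univ, true_and,
          Bool.not_eq_false] at hb
        funext x
        by_cases hx : x = v
        · subst hx; simp [hb]
        · simp [Function.update_of_ne hx]
    have hsplit := Finset.card_filter_add_card_filter_not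
      (s := (Finset.univ : Finset (V → Bool))) (p := fun b => b v = false)
    rw [← Finset.card_univ, ← hsplit, ← hF0, ← hbij]
    ring
  omega

end


/-- **Statement 7 (Pruning Lemma, Lemma 4.3).**
Randomness is modeled by the uniform distribution on pairs `(b, π)` where
`b : V → Bool` is the vector of independent uniform bits and `π` is a uniformly random
permutation of `V` (the random linear order `≺` is `v ≺ w ↔ π v < π w`, which is a
uniformly random linear order, independent of the bits).
`A = {v | b v = 1}`; `M b π` is the lexicographically first maximal independent set of
the induced subgraph `G[A]` w.r.t. `≺`; and `R b π` is the set of vertices `v` with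
`b v = 0`, no neighbor in `M`, and some neighbor `w` with `w ∉ M` having no neighbor
in `M`.  Then `E[|R|] ≤ |U| / 4`. -/theorem pruning_lemma {V : Type*} [Fintype V] [LinearOrder V]
    (G : SimpleGraph V)
    (M : (V → Bool) → Equiv.Perm V → Set V)
    (hMsub : ∀ b π, ∀ v ∈ M b π, b v = true)
    (hMfix : ∀ b π, ∀ v : V, b v = true →
      (v ∈ M b π ↔ ∀ w : V, G.Adj v w → b w = true → π v < π w → w ∉ M b π))
    (R : (V → Bool) → Equiv.Perm V → Set V)
    (hR : ∀ b π, ∀ v : V, v ∈ R b π ↔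
      (b v = false ∧ (∀ w, G.Adj v w → w ∉ M b π) ∧
        ∃ w, G.Adj v w ∧ w ∉ M b π ∧ ∀ u, G.Adj w u → u ∉ M b π)) :
    (∑ p : (V → Bool) × Equiv.Perm V, ((R p.1 p.2).ncard : ℝ))
      / (Fintype.card ((V → Bool) × Equiv.Perm V) : ℝ)
      ≤ (Fintype.card V : ℝ) / 4 := by
  classical
  have key := count_lemma G M hMsub hMfix R hR
  have hnc : ∀ (b : V → Bool) (π : Equiv.Perm V),
      (R b π).ncard = (Finset.univ.filter (fun v => v ∈ R b π)).card := by
    intro b π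
    rw [← Set.ncard_coe_finset]
    congr 1
    ext x
    simp
  have hnat : 4 * (∑ p : (V → Bool) × Equiv.Perm V, (R p.1 p.2).ncard)
      ≤ Fintype.card V * Fintype.card ((V → Bool) × Equiv.Perm V) := by
    have e1 : (∑ p : (V → Bool) × Equiv.Perm V, (R p.1 p.2).ncard)
        = ∑ v : V, ∑ π : Equiv.Perm V,
            (Finset.univ.filter (fun b : V → Bool => v ∈ R b π)).card := by
      simp only [hnc, Finset.card_filter]
      rw [Fintype.sum_prod_type]
      refine (Finset.sum_comm).trans ?_
      refine (Finset.sum_congr rfl fun π _ => Finset.sum_comm).trans ?_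
      exact Finset.sum_comm
    rw [e1, Finset.mul_sum]
    calc ∑ v : V, 4 * ∑ π : Equiv.Perm V,
            (Finset.univ.filter (fun b : V → Bool => v ∈ R b π)).card
        ≤ ∑ v : V, ∑ π : Equiv.Perm V, Fintype.card (V → Bool) := by
          refine Finset.sum_le_sum fun v _ => ?_
          rw [Finset.mul_sum]
          exact Finset.sum_le_sum fun π _ => key π v
      _ = Fintype.card V * Fintype.card ((V → Bool) × Equiv.Perm V) := by
          simp [Fintype.card_prod, Finset.sum_const, mul_comm, mul_assoc]
  have hpos : (0 : ℝ) < (Fintype.card ((V → Bool) × Equiv.Perm V) : ℝ) := by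
    exact_mod_cast Fintype.card_pos
  rw [div_le_div_iff₀ hpos (by norm_num)]
  have : (∑ p : (V → Bool) × Equiv.Perm V, ((R p.1 p.2).ncard : ℝ))
      = ((∑ p : (V → Bool) × Equiv.Perm V, (R p.1 p.2).ncard : ℕ) : ℝ) := by
    push_cast
    rfl
  rw [this]
  have := hnat
  have hcast : ((4 * ∑ p : (V → Bool) × Equiv.Perm V, (R p.1 p.2).ncard : ℕ) : ℝ)
      ≤ ((Fintype.card V * Fintype.card ((V → Bool) × Equiv.Perm V) : ℕ) : ℝ) := by
    exact_mod_cast hnat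
  push_cast at hcast ⊢
  linarith
end

section
/- Let G be a finite simple graph with vertex set U. Let (X_v)_{v ∈ U} be independent random bits, each equal to 1 with probability 1/2, and independently let ≺ be a uniformly random linear order on U. Let A = { v ∈ U : X_v = 1 }, and let M be the lexicographically first maximal independent set of the induced subgraph G[A] with respect to ≺. Let L = { v ∈ U : v is not isolated in G and X_v = 1 } and let R = { v ∈ U : X_v = 0, v has no neighbor in M, and v has some neighbor w with w ∉ M and w has no neighbor in M }. Then E[|L| + |R|] ≤ (3/4)·|U|. -/
open Finset

section SleepingMIS
variable {V : Type*} [Fintype V] [LinearOrder V] (G : SimpleGraph V)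
  (M : (V → Bool) → Equiv.Perm V → Set V)

lemma Mloc
    (hMsub : ∀ b π, ∀ v ∈ M b π, b v = true)
    (hMfix : ∀ b π, ∀ v : V, b v = true →
      (v ∈ M b π ↔ ∀ w : V, G.Adj v w → b w = true → π v < π w → w ∉ M b π))
    (b b' : V → Bool) (π : Equiv.Perm V) :
    ∀ u : V, (∀ x, π u ≤ π x → b x = b' x) → (u ∈ M b π ↔ u ∈ M b' π) := by
  intro u
  induction u using (InvImage.wf (fun u : V => π u) (wellFounded_gt)).induction with
  | _ u IH =>
  intro hagree
  have hbu : b u = b' u := hagree u le_rfl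
  cases hb : b u with
  | false =>
    constructor
    · intro h; exact absurd (hMsub b π u h) (by simp [hb])
    · intro h; exact absurd (hMsub b' π u h) (by rw [← hbu]; simp [hb])
  | true =>
    rw [hMfix b π u hb, hMfix b' π u (by rw [← hbu]; exact hb)]
    constructor
    · intro h w hadj hbw hlt hm
      have hiff := IH w hlt (fun x hx => hagree x (le_of_lt (lt_of_lt_of_le hlt hx)))
      exact h w hadj (by rw [hagree w hlt.le]; exact hbw) hlt (hiff.mpr hm)
    · intro h w hadj hbw hlt hm
      have hiff := IH w hlt (fun x hx => hagree x (le_of_lt (lt_of_lt_of_le hlt hx)))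
      exact h w hadj (by rw [← hagree w hlt.le]; exact hbw) hlt (hiff.mp hm)

lemma Mflip
    (hMsub : ∀ b π, ∀ v ∈ M b π, b v = true)
    (hMfix : ∀ b π, ∀ v : V, b v = true →
      (v ∈ M b π ↔ ∀ w : V, G.Adj v w → b w = true → π v < π w → w ∉ M b π))
    (b : V → Bool) (π : Equiv.Perm V) (w : V) (hbw : b w = false)
    (hnb : ∀ u, G.Adj w u → u ∉ M b π) :
    w ∈ M (Function.update b w true) π ∧
    ∀ u, π w < π u → (u ∈ M (Function.update b w true) π ↔ u ∈ M b π) := by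
  have hloc : ∀ u, π w < π u →
      (u ∈ M (Function.update b w true) π ↔ u ∈ M b π) := by
    intro u hu
    refine Mloc G M hMsub hMfix _ _ π u (fun x hx => ?_)
    have hxw : x ≠ w := by
      intro h; subst h; exact absurd (lt_of_lt_of_le hu hx) (lt_irrefl _)
    simp [Function.update_apply, hxw]
  refine ⟨?_, hloc⟩
  refine (hMfix _ π w (by simp)).mpr ?_
  intro u hadj _ hlt hm
  exact hnb u hadj ((hloc u hlt).mp hm)

end SleepingMIS

/-- **Lemma 4.2 + Pruning Lemma 4.3 combined.**
Randomness is modeled by the uniform distribution on pairs `(b, π)` where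
`b : V → Bool` is the vector of independent uniform bits and `π` is a uniformly random
permutation of `V` (the random linear order `≺` is `v ≺ w ↔ π v < π w`, which is a
uniformly random linear order, independent of the bits).
`A = {v | b v = 1}`; `M b π` is the lexicographically first maximal independent set of
`G[A]` w.r.t. `≺`; `L b` is the set of non-isolated vertices with bit `1`; and `R b π`
is the set of vertices `v` with `b v = 0`, no neighbor in `M`, and some neighbor `w`
with `w ∉ M` having no neighbor in `M`.  Then `E[|L| + |R|] ≤ (3/4)·|U|`. -/
theorem left_plus_right_participants {V : Type*} [Fintype V] [LinearOrder V]
    (G : SimpleGraph V)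
    (M : (V → Bool) → Equiv.Perm V → Set V)
    (hMsub : ∀ b π, ∀ v ∈ M b π, b v = true)
    (hMfix : ∀ b π, ∀ v : V, b v = true →
      (v ∈ M b π ↔ ∀ w : V, G.Adj v w → b w = true → π v < π w → w ∉ M b π))
    (L : (V → Bool) → Set V)
    (hL : ∀ b, ∀ v : V, v ∈ L b ↔ ((∃ w, G.Adj v w) ∧ b v = true))
    (R : (V → Bool) → Equiv.Perm V → Set V)
    (hR : ∀ b π, ∀ v : V, v ∈ R b π ↔
      (b v = false ∧ (∀ w, G.Adj v w → w ∉ M b π) ∧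
        ∃ w, G.Adj v w ∧ w ∉ M b π ∧ ∀ u, G.Adj w u → u ∉ M b π)) :
    (∑ p : (V → Bool) × Equiv.Perm V, (((L p.1).ncard : ℝ) + ((R p.1 p.2).ncard : ℝ)))
      / (Fintype.card ((V → Bool) × Equiv.Perm V) : ℝ)
      ≤ (3 / 4 : ℝ) * (Fintype.card V : ℝ) := by
  classical
  set N := Fintype.card ((V → Bool) × Equiv.Perm V) with hN
  have hNpos : 0 < N := Fintype.card_pos
  -- a witness from R has bit false
  have hwitex : ∀ (p : (V → Bool) × Equiv.Perm V) (v : V), v ∈ R p.1 p.2 →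
      ∃ w, G.Adj v w ∧ p.1 w = false ∧ ∀ u, G.Adj w u → u ∉ M p.1 p.2 := by
    rintro p v hv
    obtain ⟨-, -, w, hadj, hwM, hnb⟩ := (hR p.1 p.2 v).mp hv
    refine ⟨w, hadj, ?_, hnb⟩
    by_contra hbw
    have hbw' : p.1 w = true := by
      cases h : p.1 w
      · exact absurd h hbw
      · rfl
    exact hwM ((hMfix p.1 p.2 w hbw').mpr (fun u hu _ _ => hnb u hu))
  -- per-vertex counting bound
  have key : ∀ v : V,
      4 * ((univ.filter (fun p : (V → Bool) × Equiv.Perm V => v ∈ L p.1)).card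
        + (univ.filter (fun p : (V → Bool) × Equiv.Perm V => v ∈ R p.1 p.2)).card)
      ≤ 3 * N := by
    intro v
    by_cases hiso : ∃ w, G.Adj v w
    · -- non-isolated vertex
      set A := univ.filter (fun p : (V → Bool) × Equiv.Perm V => p.1 v = true) with hA
      set A' := univ.filter (fun p : (V → Bool) × Equiv.Perm V => p.1 v = false) with hA'
      have hLA : (univ.filter (fun p : (V → Bool) × Equiv.Perm V => v ∈ L p.1)) = A := by
        refine Finset.filter_congr (fun p _ => ?_)
        simp [hL, hiso]
      have hAA' : A.card = A'.card := by
        refine Finset.card_nbij' (fun p => (Function.update p.1 v false, p.2))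
          (fun p => (Function.update p.1 v true, p.2)) ?_ ?_ ?_ ?_
        · intro p hp; simp [hA']
        · intro p hp; simp [hA]
        · intro p hp
          have hp : p.1 v = true := by simpa [hA] using hp
          show (Function.update (Function.update p.1 v false) v true, p.2) = p
          rw [Function.update_idem, ← hp, Function.update_eq_self]
        · intro p hp
          have hp : p.1 v = false := by simpa [hA'] using hp
          show (Function.update (Function.update p.1 v true) v false, p.2) = p
          rw [Function.update_idem, ← hp, Function.update_eq_self]
      have hAdisj : Disjoint A A' := by
        rw [Finset.disjoint_left]
        intro p hpA hpA'
        rw [hA, mem_filter] at hpA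
        rw [hA', mem_filter] at hpA'
        rw [hpA.2] at hpA'
        exact absurd hpA'.2 (by simp)
      have hsplit : A.card + A'.card = N := by
        rw [hN, ← Finset.card_univ, ← Finset.card_union_of_disjoint hAdisj]
        congr 1
        ext p
        cases hpv : p.1 v <;> simp [hA, hA', hpv]
      -- the pruning injection
      set S := univ.filter (fun p : (V → Bool) × Equiv.Perm V => v ∈ R p.1 p.2) with hS
      set B := univ.filter (fun p : (V → Bool) × Equiv.Perm V =>
        p.1 v = false ∧ ∃ w, G.Adj v w ∧ w ∈ M p.1 p.2) with hB
      set wit : (V → Bool) × Equiv.Perm V → V := fun p =>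
        if h : v ∈ R p.1 p.2 then Classical.choose (hwitex p v h) else v with hwitdef
      have hwitspec : ∀ p : (V → Bool) × Equiv.Perm V, v ∈ R p.1 p.2 →
          G.Adj v (wit p) ∧ p.1 (wit p) = false ∧
            ∀ u, G.Adj (wit p) u → u ∉ M p.1 p.2 := by
        intro p hp
        rw [hwitdef]
        simp only [dif_pos hp]
        exact Classical.choose_spec (hwitex p v hp)
      set f : (V → Bool) × Equiv.Perm V → (V → Bool) × Equiv.Perm V :=
        fun p => (Function.update p.1 (wit p) true, p.2) with hf
      -- wit p is in M (f p), and membership above wit p is unchanged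
      have hwM : ∀ p : (V → Bool) × Equiv.Perm V, v ∈ R p.1 p.2 →
          wit p ∈ M (f p).1 p.2 ∧
          ∀ u, p.2 (wit p) < p.2 u → (u ∈ M (f p).1 p.2 ↔ u ∈ M p.1 p.2) := by
        intro p hp
        obtain ⟨hadj, hbw, hnb⟩ := hwitspec p hp
        exact Mflip G M hMsub hMfix p.1 p.2 (wit p) hbw hnb
      -- any neighbor of v in M (f p) has position ≤ wit p
      have hmaxM : ∀ p : (V → Bool) × Equiv.Perm V, v ∈ R p.1 p.2 →
          ∀ w', G.Adj v w' → w' ∈ M (f p).1 p.2 → p.2 w' ≤ p.2 (wit p) := by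
        intro p hp w' hadj hm
        by_contra hgt
        push_neg at hgt
        have := ((hwM p hp).2 w' hgt).mp hm
        exact ((hR p.1 p.2 v).mp hp).2.1 w' hadj this
      have hfmem : ∀ p ∈ S, f p ∈ B := by
        intro p hp
        rw [hS, mem_filter] at hp
        have hRv := hp.2
        obtain ⟨hadj, hbw, hnb⟩ := hwitspec p hRv
        have hvw : v ≠ wit p := G.ne_of_adj hadj
        rw [hB, mem_filter]
        refine ⟨mem_univ _, ?_, wit p, hadj, (hwM p hRv).1⟩
        show (Function.update p.1 (wit p) true) v = false
        rw [Function.update_apply, if_neg hvw]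
        exact ((hR p.1 p.2 v).mp hRv).1
      have hinj : Set.InjOn f S := by
        intro p hp q hq hfpq
        rw [hS, coe_filter] at hp hq
        simp only [Set.mem_setOf_eq] at hp hq
        have hRp := hp.2
        have hRq := hq.2
        have hπ : p.2 = q.2 := by
          have h2 : (f p).2 = (f q).2 := by rw [hfpq]
          simpa [hf] using h2
        have hb' : (f p).1 = (f q).1 := by rw [hfpq]
        -- wit p = wit q
        have hww : wit p = wit q := by
          have h1 : p.2 (wit q) ≤ p.2 (wit p) := by
            refine hmaxM p hRp (wit q) (hwitspec q hRq).1 ?_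
            rw [hb']; rw [hπ]; exact (hwM q hRq).1
          have h2 : p.2 (wit p) ≤ p.2 (wit q) := by
            have := hmaxM q hRq (wit p) (hwitspec p hRp).1 (by rw [← hb', ← hπ]; exact (hwM p hRp).1)
            rw [hπ]; exact this
          exact p.2.injective (le_antisymm h2 h1)
        have hb1 : p.1 = q.1 := by
          funext x
          by_cases hx : x = wit p
          · subst hx
            rw [(hwitspec p hRp).2.1, hww, (hwitspec q hRq).2.1]
          · have hthis := congrFun hb' x
            simp only [hf, Function.update_apply, ← hww, if_neg hx] at hthis
            exact hthis
        exact Prod.ext hb1 hπ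
      have hSB : S.card ≤ B.card := Finset.card_le_card_of_injOn f hfmem hinj
      have hSsub : S ⊆ A' := by
        intro p hp
        rw [hS, mem_filter] at hp
        rw [hA', mem_filter]
        exact ⟨mem_univ _, ((hR p.1 p.2 v).mp hp.2).1⟩
      have hBsub : B ⊆ A' := by
        intro p hp
        rw [hB, mem_filter] at hp
        rw [hA', mem_filter]
        exact ⟨mem_univ _, hp.2.1⟩
      have hdisj : Disjoint S B := by
        rw [Finset.disjoint_left]
        intro p hpS hpB
        rw [hS, mem_filter] at hpS
        rw [hB, mem_filter] at hpB
        obtain ⟨-, -, w, hadj, hm⟩ := hpB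
        exact ((hR p.1 p.2 v).mp hpS.2).2.1 w hadj hm
      have hSBle : S.card + B.card ≤ A'.card := by
        rw [← Finset.card_union_of_disjoint hdisj]
        exact Finset.card_le_card (Finset.union_subset hSsub hBsub)
      have h2S : 2 * S.card ≤ A'.card := by omega
      rw [hLA]
      omega
    · -- isolated vertex: both filters are empty
      have h1 : (univ.filter (fun p : (V → Bool) × Equiv.Perm V => v ∈ L p.1)) = ∅ := by
        refine Finset.filter_eq_empty_iff.mpr (fun p _ => ?_)
        rw [hL]
        rintro ⟨hw, -⟩
        exact hiso hw
      have h2 : (univ.filter (fun p : (V → Bool) × Equiv.Perm V => v ∈ R p.1 p.2)) = ∅ := by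
        refine Finset.filter_eq_empty_iff.mpr (fun p _ => ?_)
        intro hv
        obtain ⟨-, -, w, hadj, -⟩ := (hR p.1 p.2 v).mp hv
        exact hiso ⟨w, hadj⟩
      rw [h1, h2]
      simp
  -- ncard as filter card
  have hncard : ∀ s : Set V, s.ncard = (univ.filter (fun v => v ∈ s)).card := by
    intro s
    rw [Set.ncard_eq_toFinset_card' s, Set.toFinset_card, Fintype.card_subtype]
  -- total in ℕ
  set T : ℕ := ∑ p : (V → Bool) × Equiv.Perm V,
    ((univ.filter (fun v => v ∈ L p.1)).card + (univ.filter (fun v => v ∈ R p.1 p.2)).card)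
    with hT
  have hTsum : T = ∑ v : V,
      ((univ.filter (fun p : (V → Bool) × Equiv.Perm V => v ∈ L p.1)).card
        + (univ.filter (fun p : (V → Bool) × Equiv.Perm V => v ∈ R p.1 p.2)).card) := by
    rw [hT]
    simp only [Finset.card_filter, ← Finset.sum_add_distrib]
    rw [Finset.sum_comm]
  have hTle : 4 * T ≤ 3 * (Fintype.card V * N) := by
    rw [hTsum, Finset.mul_sum]
    calc ∑ v : V, 4 * _ ≤ ∑ _v : V, 3 * N := Finset.sum_le_sum (fun v _ => key v)
    _ = Fintype.card V * (3 * N) := by rw [Finset.sum_const, Finset.card_univ, smul_eq_mul]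
    _ = 3 * (Fintype.card V * N) := by ring
  -- assemble over ℝ
  have hsumT : (∑ p : (V → Bool) × Equiv.Perm V,
      (((L p.1).ncard : ℝ) + ((R p.1 p.2).ncard : ℝ))) = (T : ℝ) := by
    rw [hT, Nat.cast_sum]
    refine Finset.sum_congr rfl (fun p _ => ?_)
    rw [hncard (L p.1), hncard (R p.1 p.2), Nat.cast_add]
  rw [hsumT, div_le_iff₀ (by exact_mod_cast hNpos)]
  have : (4 : ℝ) * T ≤ 3 * (Fintype.card V * N) := by exact_mod_cast hTle
  push_cast at this ⊢
  nlinarith [this]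
end

section
/- Let G be a finite simple graph with vertex set U, let ≺ be a linear order on U, and let X : U → {0,1} be an assignment of bits. Let A = { v : X_v = 1 } and let M be the lexicographically first maximal independent set of the induced subgraph G[A] with respect to ≺. Process the vertices of U one at a time in decreasing ≺-order, maintaining labels as follows: when a vertex v is processed, if v is currently unlabeled then v is labeled 'sequence-fixed', and moreover if X_v = 1 then every currently unlabeled neighbor of v is labeled 'neighbor-fixed'. Then: (1) every sequence-fixed vertex v with X_v = 1 belongs to M; and (2) every neighbor-fixed vertex w satisfies w ∉ M and w has a neighbor in M. -/
/-- **Lemma 4.7, deferred-decision labeling.**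
`G` is a finite simple graph whose vertex set carries the linear order `<` (the order
`≺`), `X : V → Bool` is an assignment of bits, `A = {v | X v = true}`, and `M` is the
lexicographically first maximal independent set of `G[A]` w.r.t. `<`.
The vertices are processed one at a time in decreasing order; a vertex is labeled
*sequence-fixed* if it is unlabeled when processed, and whenever a vertex `v` is
sequence-fixed with `X v = 1`, all its currently unlabeled neighbors are labeled
*neighbor-fixed*.  Unwinding this process along the decreasing order, the set `SF` of
sequence-fixed vertices is characterized by the fixed point:
`v ∈ SF ↔ every neighbor w of v with v < w and X w = 1 satisfies w ∉ SF`,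
and the neighbor-fixed vertices are exactly those not in `SF`.
Then (1) every sequence-fixed vertex `v` with `X v = 1` belongs to `M`, and
(2) every neighbor-fixed vertex `w` satisfies `w ∉ M` and has a neighbor in `M`. -/
theorem deferred_decision_labels {V : Type*} [Fintype V] [LinearOrder V]
    (G : SimpleGraph V) (X : V → Bool) (M : Set V)
    (hMsub : ∀ v ∈ M, X v = true)
    (hMfix : ∀ v : V, X v = true →
      (v ∈ M ↔ ∀ w : V, G.Adj v w → X w = true → v < w → w ∉ M))
    (SF : Set V)
    (hSF : ∀ v : V, v ∈ SF ↔ ∀ w : V, G.Adj v w → v < w → X w = true → w ∉ SF) :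
    (∀ v ∈ SF, X v = true → v ∈ M) ∧
    (∀ w : V, w ∉ SF → w ∉ M ∧ ∃ u, G.Adj w u ∧ u ∈ M) := by
  have wf : WellFounded (fun a b : V => b < a) := wellFounded_gt
  have key : ∀ v : V, X v = true → (v ∈ SF ↔ v ∈ M) := by
    intro v
    refine wf.induction (C := fun v => X v = true → (v ∈ SF ↔ v ∈ M)) v (fun v ih hX => ?_)
    rw [hSF, hMfix v hX]
    constructor
    · intro h w hadj hXw hlt hM
      exact h w hadj hlt hXw ((ih w hlt hXw).mpr hM)
    · intro h w hadj hlt hXw hS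
      exact h w hadj hXw hlt ((ih w hlt hXw).mp hS)
  constructor
  · intro v hv hX
    exact (key v hX).mp hv
  · intro w hw
    have := (hSF w).not.mp hw
    push_neg at this
    obtain ⟨u, hadj, hlt, hXu, hu⟩ := this
    have huM : u ∈ M := (key u hXu).mp hu
    refine ⟨fun hwM => ?_, u, hadj, huM⟩
    exact (hMfix w (hMsub w hwM)).mp hwM u hadj hXu hlt huM
end
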